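/- Let N, K be positive natural numbers and let T : Matrix (Fin N) (Fin K) ℂ → Matrix (Fin N) (Fin K) ℂ be a ℂ-linear map. Then T satisfies T(U * X) = U * T(X) for every unitary matrix U ∈ ℂ^{N×N} and every X ∈ ℂ^{N×K} if and only if there exists a matrix G ∈ ℂ^{K×K} such that T(X) = X * G for all X. -/

import Mathlib

open Matrix

/-- A `ℂ`-linear map `T` on `N × K` complex matrices satisfies `T (U * X) = U * T X`
for every unitary `U` iff `T X = X * G` for some fixed `G ∈ ℂ^{K×K}`. -/
theorem linear_unitary_equivariant_iff_right_mul
    (N K : ℕ) (hN : 0 < N) (hK : 0 < K)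
    (T : Matrix (Fin N) (Fin K) ℂ →ₗ[ℂ] Matrix (Fin N) (Fin K) ℂ) :
    (∀ (U : Matrix (Fin N) (Fin N) ℂ) (X : Matrix (Fin N) (Fin K) ℂ),
        Uᴴ * U = 1 → T (U * X) = U * T X)
    ↔ ∃ G : Matrix (Fin K) (Fin K) ℂ, ∀ X : Matrix (Fin N) (Fin K) ℂ, T X = X * G := by
  constructor
  · intro h
    -- Key: T commutes with left multiplication by every std basis matrix
    have key : ∀ (j i : Fin N) (X : Matrix (Fin N) (Fin K) ℂ),
        T (Matrix.single j i (1:ℂ) * X) = Matrix.single j i (1:ℂ) * T X := by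
      intro j i X
      set σ := Equiv.swap i j with hσ
      set P : Matrix (Fin N) (Fin N) ℂ := σ.permMatrix ℂ with hPdef
      set D : Matrix (Fin N) (Fin N) ℂ :=
        diagonal (fun a => if a = i then (1:ℂ) else -1) with hDdef
      have hPa : ∀ a b, P a b = if b = σ a then (1:ℂ) else 0 := by
        intro a b
        simp only [hPdef, Equiv.Perm.permMatrix, PEquiv.toMatrix_apply,
          Equiv.toPEquiv_apply, Option.mem_def, Option.some.injEq]
        exact if_congr eq_comm rfl rfl
      have hσi : ∀ a, σ a = i ↔ a = j := by
        intro a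
        rw [hσ, Equiv.apply_eq_iff_eq_symm_apply, Equiv.symm_swap, Equiv.swap_apply_left]
      have hP : Pᴴ * P = 1 := by
        ext a b
        simp only [Matrix.mul_apply, conjTranspose_apply, hPa, Matrix.one_apply]
        rw [Finset.sum_eq_single (σ.symm a)]
        · by_cases hab : a = b <;>
            simp [hab, Equiv.eq_symm_apply, Equiv.symm_apply_eq, eq_comm]
        · intro c _ hc
          have h1 : ¬ (a = σ c) := by
            intro hh; exact hc (by simp [hh])
          simp [h1]
        · simp
      have hds : star (fun a => if a = i then (1:ℂ) else -1)
          = (fun a => if a = i then (1:ℂ) else -1) := by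
        funext a
        by_cases hai : a = i <;> simp [hai]
      have hD : Dᴴ * D = 1 := by
        rw [hDdef, diagonal_conjTranspose, hds, diagonal_mul_diagonal]
        ext a b
        by_cases hab : a = b
        · subst hab
          by_cases hai : a = i <;>
            simp [Matrix.diagonal_apply_eq, hai, Matrix.one_apply_eq]
        · simp [Matrix.diagonal_apply_ne _ hab, Matrix.one_apply_ne hab]
      have hPD : (P * D)ᴴ * (P * D) = 1 := by
        rw [conjTranspose_mul, Matrix.mul_assoc, ← Matrix.mul_assoc Pᴴ, hP, Matrix.one_mul, hD]
      have hE : Matrix.single j i (1:ℂ) = (2⁻¹ : ℂ) • P + (2⁻¹ : ℂ) • (P * D) := by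
        ext a b
        have hmul : (P * D) a b = P a b * (if b = i then (1:ℂ) else -1) := by
          rw [hDdef, mul_diagonal]
        rw [Matrix.add_apply, Matrix.smul_apply, Matrix.smul_apply, hmul, hPa,
          smul_eq_mul, smul_eq_mul]
        simp only [Matrix.single, of_apply]
        by_cases hb : b = σ a
        · by_cases hbi : b = i
          · have haj : a = j := (hσi a).mp (by rw [← hb, hbi])
            rw [if_pos ⟨haj.symm, hbi.symm⟩, if_pos hb, if_pos hbi]
            norm_num
          · have hne : ¬(j = a ∧ i = b) := fun ⟨_, h2⟩ => hbi h2.symm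
            rw [if_neg hne, if_pos hb, if_neg hbi]
            ring
        · have hne : ¬(j = a ∧ i = b) := by
            rintro ⟨h1, h2⟩
            exact hb (h2.symm.trans ((hσi a).mpr h1.symm).symm)
          rw [if_neg hne, if_neg hb]
          ring
      have step : T (Matrix.single j i (1:ℂ) * X)
          = (2⁻¹ : ℂ) • T (P * X) + (2⁻¹ : ℂ) • T ((P * D) * X) := by
        rw [hE, Matrix.add_mul, Matrix.smul_mul, Matrix.smul_mul, map_add,
          LinearMap.map_smul, LinearMap.map_smul]
      rw [step, h P X hP, h (P * D) X hPD, hE, Matrix.add_mul, Matrix.smul_mul,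
        Matrix.smul_mul]
    -- Build G
    set z : Fin N := ⟨0, hN⟩ with hz
    set G : Matrix (Fin K) (Fin K) ℂ :=
      Matrix.of (fun k l => T (Matrix.single z k (1:ℂ)) z l) with hG
    refine ⟨G, fun X => ?_⟩
    have hsplit : ∀ (i : Fin N) (k : Fin K),
        Matrix.single i z (1:ℂ) * Matrix.single z k (1:ℂ) = Matrix.single i k 1 := by
      intro i k
      ext a b
      rw [Matrix.mul_apply, Finset.sum_eq_single z]
      · by_cases h1 : i = a <;> by_cases h2 : k = b <;>
          simp [Matrix.single, h1, h2]
      · intro c _ hc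
        simp [Matrix.single, Ne.symm hc]
      · simp
    have hTstd : ∀ (i : Fin N) (k : Fin K),
        T (Matrix.single i k (1:ℂ))
          = Matrix.single i z (1:ℂ) * T (Matrix.single z k (1:ℂ)) := by
      intro i k
      rw [← key i z, hsplit]
    have hEmul : ∀ (i : Fin N) (M : Matrix (Fin N) (Fin K) ℂ) (a : Fin N) (l : Fin K),
        (Matrix.single i z (1:ℂ) * M) a l = if i = a then M z l else 0 := by
      intro i M a l
      rw [Matrix.mul_apply, Finset.sum_eq_single z]
      · by_cases h1 : i = a <;> simp [Matrix.single, h1]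
      · intro c _ hc
        simp [Matrix.single, Ne.symm hc]
      · simp
    have hTE : ∀ (i a : Fin N) (k l : Fin K),
        T (Matrix.single i k (1:ℂ)) a l = if i = a then G k l else 0 := by
      intro i a k l
      rw [hTstd i k, hEmul]
      simp [hG]
    have hX := Matrix.matrix_eq_sum_single X
    calc T X = T (∑ i, ∑ k, Matrix.single i k (X i k)) := by rw [← hX]
      _ = ∑ i, ∑ k, (X i k) • T (Matrix.single i k (1:ℂ)) := by
          rw [map_sum]
          refine Finset.sum_congr rfl fun i _ => ?_
          rw [map_sum]
          refine Finset.sum_congr rfl fun k _ => ?_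
          rw [show Matrix.single i k (X i k) = X i k • Matrix.single i k (1:ℂ) by
            rw [Matrix.smul_single, smul_eq_mul, mul_one], LinearMap.map_smul]
      _ = X * G := by
          ext a l
          simp only [Matrix.sum_apply, Matrix.smul_apply, hTE, smul_ite,
            smul_zero, smul_eq_mul]
          rw [Finset.sum_comm, Matrix.mul_apply]
          refine Finset.sum_congr rfl fun k _ => ?_
          simp [Finset.sum_ite_eq']
  · rintro ⟨G, hG⟩ U X _
    rw [hG, hG, Matrix.mul_assoc]
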